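/- Let J₂ ⊆ I be ideals of a commutative ring R and f ∈ I an element such that: (1) (f) ∩ Iⁿ = f·Iⁿ⁻¹ for all n ≥ 1; (2) f is a nonzerodivisor modulo J₂, i.e. (J₂ : f) = J₂; and (3) the images of J₂ and I in R/(f) form an Aluffi torsion-free pair. Then J₂ ∩ Iⁿ = J₂·Iⁿ⁻¹ for all n ≥ 1. -/

import Mathlib

/-- Base case of the descent theorem: if `(f) ⊆ I` is Aluffi torsion-free, `f` is a
nonzerodivisor mod `J₂`, and the images of `J₂ ⊆ I` in `R/(f)` form an Aluffi
torsion-free pair, then `J₂ ⊆ I` is Aluffi torsion-free. -/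
theorem aluffi_descent_principal {R : Type*} [CommRing R] (J₂ I : Ideal R)
    (hJ₂I : J₂ ≤ I) (f : R) (hf : f ∈ I)
    (h1 : ∀ n : ℕ, 1 ≤ n → Ideal.span {f} ⊓ I ^ n = Ideal.span {f} * I ^ (n - 1))
    (h2 : Submodule.colon J₂ (Ideal.span {f}) = J₂)
    (h3 : ∀ n : ℕ, 1 ≤ n →
      (J₂.map (Ideal.Quotient.mk (Ideal.span {f}))) ⊓
          (I.map (Ideal.Quotient.mk (Ideal.span {f}))) ^ n =
        (J₂.map (Ideal.Quotient.mk (Ideal.span {f}))) *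
          (I.map (Ideal.Quotient.mk (Ideal.span {f}))) ^ (n - 1)) :
    ∀ n : ℕ, 1 ≤ n → J₂ ⊓ I ^ n = J₂ * I ^ (n - 1) := by
  intro n hn
  induction n with
  | zero => omega
  | succ m ih =>
    rcases Nat.lt_or_ge m 1 with hm | hm
    · interval_cases m
      simp [inf_eq_left.mpr hJ₂I]
    · have ihm := ih hm
      simp only [Nat.add_sub_cancel]
      have hmul_le : J₂ * I ^ m ≤ J₂ ⊓ I ^ (m + 1) := by
        refine le_inf (Ideal.mul_le_inf.trans inf_le_left) ?_
        rw [pow_succ']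
        exact Ideal.mul_mono_left hJ₂I
      apply le_antisymm
      · intro x hx
        obtain ⟨hxJ, hxI⟩ := hx
        set π := Ideal.Quotient.mk (Ideal.span {f}) with hπ
        have hximg : π x ∈ Ideal.map π (J₂ * I ^ m) := by
          rw [Ideal.map_mul, Ideal.map_pow]
          have h3' := h3 (m + 1) (by omega)
          simp only [Nat.add_sub_cancel] at h3'
          rw [← h3']
          refine ⟨Ideal.mem_map_of_mem π hxJ, ?_⟩
          rw [← Ideal.map_pow]
          exact Ideal.mem_map_of_mem π hxI
        obtain ⟨y, hy, hyx⟩ := Ideal.mem_image_of_mem_map_of_surjective π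
          Ideal.Quotient.mk_surjective hximg
        have hker : x - y ∈ Ideal.span {f} := by
          rw [← Ideal.Quotient.eq] at *
          exact hyx.symm
        have hdiffI : x - y ∈ I ^ (m + 1) := by
          refine sub_mem hxI ((hmul_le hy).2)
        have hdiff : x - y ∈ Ideal.span {f} * I ^ m := by
          have h1' := h1 (m + 1) (by omega)
          simp only [Nat.add_sub_cancel] at h1'
          rw [← h1']
          exact ⟨hker, hdiffI⟩
        rw [Ideal.mem_span_singleton_mul] at hdiff
        obtain ⟨z, hzI, hzf⟩ := hdiff
        have hyJ : y ∈ J₂ := (hmul_le hy).1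
        have hfzJ : f * z ∈ J₂ := by rw [hzf]; exact sub_mem hxJ hyJ
        have hzJ : z ∈ J₂ := by
          rw [← h2, Submodule.mem_colon]
          intro p hp
          obtain ⟨c, rfl⟩ := Ideal.mem_span_singleton.mp hp
          rw [smul_eq_mul, show z * (f * c) = f * z * c by ring]
          exact Ideal.mul_mem_right c _ hfzJ
        have hzmem : z ∈ J₂ * I ^ (m - 1) := by
          rw [← ihm]; exact ⟨hzJ, hzI⟩
        have hfz : f * z ∈ J₂ * I ^ m := by
          have : f * z ∈ I * (J₂ * I ^ (m - 1)) :=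
            Ideal.mul_mem_mul hf hzmem
          have heq : I * (J₂ * I ^ (m - 1)) = J₂ * I ^ m := by
            have hm' : m - 1 + 1 = m := by omega
            rw [mul_left_comm, ← pow_succ', hm']
          rwa [heq] at this
        have : x = y + f * z := by rw [hzf]; ring
        rw [this]
        exact add_mem hy hfz
      · exact hmul_le
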